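/- For every real x with 0 ≤ x ≤ 1, every real special orthogonal 3×3 matrix O (OᵀO = I₃ and det O = 1), viewed as a complex matrix, and every 3×3 complex matrix ρ: Λ_x^c(O ρ Oᵀ) = Ω · Λ_x^c(ρ) · Ωᵀ, where Ω is the 4×4 block-diagonal matrix with first diagonal entry 1 and lower-right 3×3 block equal to O; i.e., the complementary channel Λ_x^c is SO(3)-covariant. -/

import Mathlib

open Matrix

/-- The Kraus operators of the channel `Λ_x`:
`K₀ = √(1−x)·I₃` and `K_a = −i·√(x/2)·J_a` for `a = 1,2,3`. -/
noncomputable def K (x : ℝ) : Fin 4 → Matrix (Fin 3) (Fin 3) ℂ :=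
  ![(Real.sqrt (1 - x) : ℂ) • (1 : Matrix (Fin 3) (Fin 3) ℂ),
    (-Complex.I) • (Real.sqrt (x / 2) : ℂ) • !![0, 0, 0; 0, 0, 1; 0, -1, 0],
    (-Complex.I) • (Real.sqrt (x / 2) : ℂ) • !![0, 0, -1; 0, 0, 0; 1, 0, 0],
    (-Complex.I) • (Real.sqrt (x / 2) : ℂ) • !![0, 1, 0; -1, 0, 0; 0, 0, 0]]

/-- The complementary channel `Λ_x^c`, with entries `(Λ_x^c(ρ))_{αβ} = Tr(K_α ρ K_β†)`. -/
noncomputable def LamC (x : ℝ) (ρ : Matrix (Fin 3) (Fin 3) ℂ) : Matrix (Fin 4) (Fin 4) ℂ :=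
  Matrix.of fun α β => (K x α * ρ * (K x β)ᴴ).trace

/-- The `4×4` block-diagonal matrix `Ω` with first diagonal entry `1` and
lower-right `3×3` block equal to the (complexified) matrix `O`. -/
noncomputable def Omega (O : Matrix (Fin 3) (Fin 3) ℝ) : Matrix (Fin 4) (Fin 4) ℂ :=
  !![1, 0, 0, 0;
     0, (O 0 0 : ℂ), (O 0 1 : ℂ), (O 0 2 : ℂ);
     0, (O 1 0 : ℂ), (O 1 1 : ℂ), (O 1 2 : ℂ);
     0, (O 2 0 : ℂ), (O 2 1 : ℂ), (O 2 2 : ℂ)]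

set_option maxHeartbeats 2000000 in
/-- Covariance of the Kraus operators: `K_α O = O ∑_γ Ω_{αγ} K_γ`. -/
theorem K_covariance (x : ℝ) (O : Matrix (Fin 3) (Fin 3) ℝ) (hadj : O.adjugate = Oᵀ) (α : Fin 4) :
    K x α * (O.map Complex.ofReal) = (O.map Complex.ofReal) * ∑ γ, Omega O α γ • K x γ := by
  obtain ⟨a, b, c, d, e, f, g, h, i, hOe⟩ :
      ∃ a b c d e f g h i, O = !![a, b, c; d, e, f; g, h, i] :=
    ⟨_, _, _, _, _, _, _, _, _, Matrix.eta_fin_three O⟩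
  subst hOe
  rw [Matrix.adjugate_fin_three_of] at hadj
  have mk : ∀ p q : Fin 3,
      ((!![e*i - f*h, -(b*i) + c*h, b*f - c*e;
          -(d*i) + f*g, a*i - c*g, -(a*f) + c*d;
          d*h - e*g, -(a*h) + b*g, a*e - b*d] p q : ℝ) : ℂ)
        = ((!![a, b, c; d, e, f; g, h, i]ᵀ p q : ℝ) : ℂ) := by
    intro p q; rw [hadj]
  have c00 := mk 0 0; have c01 := mk 0 1; have c02 := mk 0 2
  have c10 := mk 1 0; have c11 := mk 1 1; have c12 := mk 1 2
  have c20 := mk 2 0; have c21 := mk 2 1; have c22 := mk 2 2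
  simp at c00 c01 c02 c10 c11 c12 c20 c21 c22
  fin_cases α <;> ext p q <;> fin_cases p <;> fin_cases q <;>
    simp [K, Omega, Matrix.mul_apply, Fin.sum_univ_four, Fin.sum_univ_three,
      Matrix.sum_apply, Matrix.smul_apply, Matrix.map_apply, Matrix.one_apply] <;>
    first
      | ring1
      | linear_combination (-(Complex.I * (Real.sqrt x : ℂ) * ((Real.sqrt 2 : ℂ))⁻¹)) * c00
      | linear_combination (Complex.I * (Real.sqrt x : ℂ) * ((Real.sqrt 2 : ℂ))⁻¹) * c00
      | linear_combination (-(Complex.I * (Real.sqrt x : ℂ) * ((Real.sqrt 2 : ℂ))⁻¹)) * c01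
      | linear_combination (Complex.I * (Real.sqrt x : ℂ) * ((Real.sqrt 2 : ℂ))⁻¹) * c01
      | linear_combination (-(Complex.I * (Real.sqrt x : ℂ) * ((Real.sqrt 2 : ℂ))⁻¹)) * c02
      | linear_combination (Complex.I * (Real.sqrt x : ℂ) * ((Real.sqrt 2 : ℂ))⁻¹) * c02
      | linear_combination (-(Complex.I * (Real.sqrt x : ℂ) * ((Real.sqrt 2 : ℂ))⁻¹)) * c10
      | linear_combination (Complex.I * (Real.sqrt x : ℂ) * ((Real.sqrt 2 : ℂ))⁻¹) * c10
      | linear_combination (-(Complex.I * (Real.sqrt x : ℂ) * ((Real.sqrt 2 : ℂ))⁻¹)) * c11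
      | linear_combination (Complex.I * (Real.sqrt x : ℂ) * ((Real.sqrt 2 : ℂ))⁻¹) * c11
      | linear_combination (-(Complex.I * (Real.sqrt x : ℂ) * ((Real.sqrt 2 : ℂ))⁻¹)) * c12
      | linear_combination (Complex.I * (Real.sqrt x : ℂ) * ((Real.sqrt 2 : ℂ))⁻¹) * c12
      | linear_combination (-(Complex.I * (Real.sqrt x : ℂ) * ((Real.sqrt 2 : ℂ))⁻¹)) * c20
      | linear_combination (Complex.I * (Real.sqrt x : ℂ) * ((Real.sqrt 2 : ℂ))⁻¹) * c20
      | linear_combination (-(Complex.I * (Real.sqrt x : ℂ) * ((Real.sqrt 2 : ℂ))⁻¹)) * c21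
      | linear_combination (Complex.I * (Real.sqrt x : ℂ) * ((Real.sqrt 2 : ℂ))⁻¹) * c21
      | linear_combination (-(Complex.I * (Real.sqrt x : ℂ) * ((Real.sqrt 2 : ℂ))⁻¹)) * c22
      | linear_combination (Complex.I * (Real.sqrt x : ℂ) * ((Real.sqrt 2 : ℂ))⁻¹) * c22

/-- The complementary channel `Λ_x^c` is `SO(3)`-covariant: for a real special
orthogonal matrix `O`, `Λ_x^c(O ρ Oᵀ) = Ω Λ_x^c(ρ) Ωᵀ`. -/
theorem lamC_SO3_covariant (x : ℝ) (hx0 : 0 ≤ x) (hx1 : x ≤ 1)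
    (O : Matrix (Fin 3) (Fin 3) ℝ) (hO : Oᵀ * O = 1) (hdet : O.det = 1)
    (ρ : Matrix (Fin 3) (Fin 3) ℂ) :
    LamC x (O.map Complex.ofReal * ρ * (O.map Complex.ofReal)ᵀ) =
      Omega O * LamC x ρ * (Omega O)ᵀ := by
  have hadj : O.adjugate = Oᵀ := by
    calc O.adjugate = Oᵀ * O * O.adjugate := by rw [hO, Matrix.one_mul]
      _ = Oᵀ * (O * O.adjugate) := by rw [Matrix.mul_assoc]
      _ = Oᵀ := by rw [Matrix.mul_adjugate, hdet, one_smul, Matrix.mul_one]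
  set M : Matrix (Fin 3) (Fin 3) ℂ := O.map Complex.ofReal with hMdef
  have hMt : Mᴴ = Mᵀ := by
    ext i j
    simp [hMdef, Matrix.conjTranspose_apply, Matrix.map_apply, Complex.conj_ofReal]
  have hMM : Mᵀ * M = 1 := by
    have h := congrArg (fun A : Matrix (Fin 3) (Fin 3) ℝ => A.map (Complex.ofRealHom : ℝ →+* ℂ)) hO
    simp only [Matrix.map_mul, Matrix.transpose_map, Matrix.map_one, map_zero, map_one] at h
    exact h
  have hK := K_covariance x O hadj
  have hΩ : ∀ p q, star (Omega O p q) = Omega O p q := by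
    intro p q
    fin_cases p <;> fin_cases q <;> simp [Omega, Complex.conj_ofReal, Matrix.vecHead, Matrix.vecTail]
  ext α β
  set Sa : Matrix (Fin 3) (Fin 3) ℂ := ∑ γ, Omega O α γ • K x γ with hSa
  set Sb : Matrix (Fin 3) (Fin 3) ℂ := ∑ γ, Omega O β γ • K x γ with hSb
  calc LamC x (M * ρ * Mᵀ) α β
      = ((K x α * M) * ρ * (K x β * M)ᴴ).trace := by
        simp only [LamC, Matrix.of_apply, Matrix.conjTranspose_mul, hMt, Matrix.mul_assoc]
    _ = ((M * Sa) * ρ * (M * Sb)ᴴ).trace := by rw [hK α, hK β]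
    _ = (Sa * ρ * Sbᴴ).trace := by
        rw [Matrix.conjTranspose_mul,
          show M * Sa * ρ * (Sbᴴ * Mᴴ) = M * (Sa * ρ * Sbᴴ * Mᴴ) by
            simp only [Matrix.mul_assoc],
          Matrix.trace_mul_comm, Matrix.mul_assoc, hMt, hMM, Matrix.mul_one]
    _ = (Omega O * LamC x ρ * (Omega O)ᵀ) α β := by
        simp only [hSa, hSb, Matrix.sum_mul, Matrix.mul_sum, Matrix.conjTranspose_sum,
          Matrix.conjTranspose_smul, Matrix.smul_mul, Matrix.mul_smul, Matrix.trace_sum,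
          Matrix.add_mul, Matrix.mul_add, Matrix.conjTranspose_add, Matrix.trace_add,
          Matrix.trace_smul, hΩ, LamC, Matrix.mul_apply, Matrix.transpose_apply,
          Matrix.of_apply, Fin.sum_univ_four, smul_eq_mul]
        ring
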